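/- For the no-boundary PSP index, same-partition queries require concatenation but remain correct: for s, t in the same partition G_i, d_G(s,t) = min( d_{G'_i}(s,t) computed with only intra-partition shortest paths replaced by d_{L_i}(s,t), min over boundary pairs b_p, b_q ∈ B_i of d_{L_i}(s,b_p) + d_{L̃}(b_p,b_q) + d_{L_i}(b_q,t) ), where d_{L_i} gives shortest distances within the subgraph G_i alone and d_{L̃} gives global shortest distances between boundary vertices. -/

import Mathlib

set_option linter.unusedSectionVars false


open scoped ENNReal

/-- Cost of the walk `s :: p ++ [t]`: `p` is the list of intermediate vertices, a missing
edge has weight `⊤`. -/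
noncomputable def pathCost {V : Type*} (w : V → V → ℝ≥0∞) : V → List V → V → ℝ≥0∞
  | s, [], t => w s t
  | s, x :: xs, t => w s x + pathCost w x xs t

/-- Shortest-path distance induced by the weight function `w`. -/
noncomputable def gdist {V : Type*} [DecidableEq V] (w : V → V → ℝ≥0∞) (s t : V) : ℝ≥0∞ :=
  if s = t then 0 else ⨅ p : List V, pathCost w s p t

/-- Restriction of the weights to a single partition `i` (edges leaving the partition are
removed). -/
noncomputable def restrictW {V : Type*} {k : ℕ} (part : V → Fin k) (i : Fin k)
    (w : V → V → ℝ≥0∞) : V → V → ℝ≥0∞ :=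
  fun u v => if part u = i ∧ part v = i then w u v else ⊤

section Aux

variable {V : Type*} [DecidableEq V]

lemma pathCost_mono {w w' : V → V → ℝ≥0∞} (h : ∀ u v, w u v ≤ w' u v) :
    ∀ (p : List V) (s t : V), pathCost w s p t ≤ pathCost w' s p t
  | [], s, t => h s t
  | x :: xs, s, t => add_le_add (h s x) (pathCost_mono h xs x t)

lemma gdist_mono {w w' : V → V → ℝ≥0∞} (h : ∀ u v, w u v ≤ w' u v) (s t : V) :
    gdist w s t ≤ gdist w' s t := by
  unfold gdist
  split
  · simp
  · exact iInf_mono fun p => pathCost_mono h p s t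

lemma gdist_self (w : V → V → ℝ≥0∞) (s : V) : gdist w s s = 0 := if_pos rfl

lemma gdist_le_pathCost (w : V → V → ℝ≥0∞) (s t : V) (p : List V) :
    gdist w s t ≤ pathCost w s p t := by
  unfold gdist
  split
  · simp
  · exact iInf_le _ p

lemma gdist_le_edge (w : V → V → ℝ≥0∞) (s t : V) : gdist w s t ≤ w s t :=
  gdist_le_pathCost w s t []

lemma pathCost_append (w : V → V → ℝ≥0∞) :
    ∀ (p : List V) (s b : V) (q : List V) (t : V),
      pathCost w s (p ++ b :: q) t = pathCost w s p b + pathCost w b q t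
  | [], s, b, q, t => rfl
  | x :: xs, s, b, q, t => by
      show w s x + pathCost w x (xs ++ b :: q) t = w s x + pathCost w x xs b + pathCost w b q t
      rw [pathCost_append w xs x b q t, add_assoc]

/-- Edge-prefix triangle inequality. -/
lemma gdist_edge_left (w : V → V → ℝ≥0∞) (s x t : V) :
    gdist w s t ≤ w s x + gdist w x t := by
  by_cases hxt : x = t
  · subst hxt
    rw [gdist_self, add_zero]
    exact gdist_le_edge w s x
  · unfold gdist
    rw [if_neg hxt, ENNReal.add_iInf]
    split
    · simp
    · exact le_iInf fun p => iInf_le_of_le (x :: p) le_rfl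

lemma gdist_triangle (w : V → V → ℝ≥0∞) (a b c : V) :
    gdist w a c ≤ gdist w a b + gdist w b c := by
  by_cases hab : a = b
  · subst hab; rw [gdist_self, zero_add]
  · by_cases hbc : b = c
    · subst hbc; rw [gdist_self, add_zero]
    · conv_rhs => rw [gdist, if_neg hab, gdist, if_neg hbc]
      rw [ENNReal.iInf_add]
      refine le_iInf fun p => ?_
      rw [ENNReal.add_iInf]
      refine le_iInf fun q => ?_
      exact (gdist_le_pathCost w a c (p ++ b :: q)).trans_eq (pathCost_append w p a b q c)

variable {k : ℕ} {part : V → Fin k} {i : Fin k} {w : V → V → ℝ≥0∞}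

lemma restrictW_eq {u v : V} (hu : part u = i) (hv : part v = i) :
    restrictW part i w u v = w u v := if_pos ⟨hu, hv⟩

lemma le_restrictW (u v : V) : w u v ≤ restrictW part i w u v := by
  unfold restrictW
  split
  · exact le_rfl
  · exact le_top

lemma pathCost_restrict_top {u : V} (hu : part u ≠ i) :
    ∀ (p : List V) (v : V), pathCost (restrictW part i w) u p v = ⊤
  | [], v => by
      simp only [pathCost, restrictW, if_neg (fun h : _ ∧ _ => hu h.1)]
  | x :: xs, v => by
      simp only [pathCost, restrictW, if_neg (fun h : _ ∧ _ => hu h.1), top_add]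

lemma gdist_restrict_top {u v : V} (hu : part u ≠ i) (huv : u ≠ v) :
    gdist (restrictW part i w) u v = ⊤ := by
  rw [gdist, if_neg huv]
  simp [pathCost_restrict_top hu]

/-- Key lemma for suffixes of paths: the remaining cost from an arbitrary vertex `s`
to `t ∈ G_i` dominates either the intra-partition distance or an entry through the
boundary. -/
lemma suffix_bound (B : Finset V)
    (hbd : ∀ u v, part u ≠ part v → w u v ≠ ⊤ → u ∈ B ∧ v ∈ B)
    {t : V} (ht : part t = i) :
    ∀ (p : List V) (s : V),
      min (⨅ bq ∈ B.filter (fun b => part b = i),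
            gdist w s bq + gdist (restrictW part i w) bq t)
          (gdist (restrictW part i w) s t) ≤ pathCost w s p t
  | [], s => by
      show _ ≤ w s t
      by_cases hs : part s = i
      · refine (min_le_right _ _).trans ?_
        exact (gdist_le_edge _ s t).trans_eq (restrictW_eq hs ht)
      · by_cases hw : w s t = ⊤
        · exact hw ▸ le_top
        · obtain ⟨hsB, htB⟩ := hbd s t (fun h => hs (h.trans ht)) hw
          refine (min_le_left _ _).trans ?_
          refine (iInf₂_le t (Finset.mem_filter.2 ⟨htB, ht⟩)).trans ?_
          rw [gdist_self, add_zero]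
          exact gdist_le_edge w s t
  | x :: xs, s => by
      show _ ≤ w s x + pathCost w x xs t
      by_cases hw : w s x = ⊤
      · exact hw ▸ (le_top.trans_eq (top_add _).symm)
      · refine le_trans ?_ (add_le_add_right (suffix_bound B hbd ht xs x) (w s x))
        rw [← min_add_add_left]
        refine le_min ?_ ?_
        · -- boundary term
          refine (min_le_left _ _).trans ?_
          rw [ENNReal.add_iInf]
          refine le_iInf fun bq => ?_
          rw [ENNReal.add_iInf]
          refine le_iInf fun hbq => ?_
          refine (iInf₂_le bq hbq).trans ?_
          rw [← add_assoc]
          exact add_le_add_left (gdist_edge_left w s x bq) _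
        · -- intra term
          by_cases hx : part x = i
          · by_cases hs : part s = i
            · refine (min_le_right _ _).trans ?_
              refine (gdist_edge_left (restrictW part i w) s x t).trans_eq ?_
              rw [restrictW_eq hs hx]
            · have hx' : x ≠ t ∨ True := Or.inr trivial
              obtain ⟨hsB, hxB⟩ := hbd s x (fun h => hs (h.trans hx)) hw
              refine (min_le_left _ _).trans ?_
              refine (iInf₂_le x (Finset.mem_filter.2 ⟨hxB, hx⟩)).trans ?_
              exact add_le_add_left (gdist_le_edge w s x) _
          · have hxt : x ≠ t := fun h => hx (h ▸ ht)
            rw [gdist_restrict_top hx hxt, add_top]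
            exact le_top

/-- Key lemma: the claimed minimum is a lower bound for the cost of every path. -/
lemma path_bound (B : Finset V)
    (hbd : ∀ u v, part u ≠ part v → w u v ≠ ⊤ → u ∈ B ∧ v ∈ B)
    {t : V} (ht : part t = i) :
    ∀ (p : List V) (s : V), part s = i →
      min (gdist (restrictW part i w) s t)
        (⨅ bp ∈ B.filter (fun b => part b = i),
          ⨅ bq ∈ B.filter (fun b => part b = i),
            gdist (restrictW part i w) s bp + gdist w bp bq
              + gdist (restrictW part i w) bq t) ≤ pathCost w s p t
  | [], s, hs => by
      show _ ≤ w s t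
      refine (min_le_left _ _).trans ?_
      exact (gdist_le_edge _ s t).trans_eq (restrictW_eq hs ht)
  | x :: xs, s, hs => by
      show _ ≤ w s x + pathCost w x xs t
      by_cases hw : w s x = ⊤
      · exact hw ▸ (le_top.trans_eq (top_add _).symm)
      · by_cases hx : part x = i
        · refine le_trans ?_ (add_le_add_right (path_bound B hbd ht xs x hx) (w s x))
          rw [← min_add_add_left]
          refine le_min ?_ ?_
          · refine (min_le_left _ _).trans ?_
            refine (gdist_edge_left (restrictW part i w) s x t).trans_eq ?_
            rw [restrictW_eq hs hx]
          · refine (min_le_right _ _).trans ?_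
            simp only [ENNReal.add_iInf]
            refine le_iInf fun bp => le_iInf fun hbp => le_iInf fun bq => le_iInf fun hbq => ?_
            refine (iInf₂_le bp hbp).trans ((iInf₂_le bq hbq).trans ?_)
            have h1 : gdist (restrictW part i w) s bp ≤
                w s x + gdist (restrictW part i w) x bp := by
              refine (gdist_edge_left (restrictW part i w) s x bp).trans_eq ?_
              rw [restrictW_eq hs hx]
            calc gdist (restrictW part i w) s bp + gdist w bp bq
                  + gdist (restrictW part i w) bq t
                ≤ (w s x + gdist (restrictW part i w) x bp) + gdist w bp bq
                  + gdist (restrictW part i w) bq t := by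
                  exact add_le_add_left (add_le_add_left h1 _) _
              _ = w s x + (gdist (restrictW part i w) x bp + gdist w bp bq
                  + gdist (restrictW part i w) bq t) := by ring
        · -- the path leaves the partition immediately: `s` is a boundary vertex
          obtain ⟨hsB, hxB⟩ := hbd s x (fun h => hx ((h.symm).trans hs)) hw
          have hsBi : s ∈ B.filter (fun b => part b = i) := Finset.mem_filter.2 ⟨hsB, hs⟩
          have hxt : x ≠ t := fun h => hx (h ▸ ht)
          have h2 := suffix_bound B hbd ht xs x
          rw [gdist_restrict_top hx hxt, min_top_right] at h2
          refine (min_le_right _ _).trans ?_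
          refine le_trans ?_ (add_le_add_right h2 (w s x))
          rw [ENNReal.add_iInf]
          refine le_iInf fun bq => ?_
          rw [ENNReal.add_iInf]
          refine le_iInf fun hbq => ?_
          refine (iInf₂_le s hsBi).trans ((iInf₂_le bq hbq).trans ?_)
          rw [gdist_self, zero_add, ← add_assoc]
          exact add_le_add_left (gdist_edge_left w s x bq) _

end Aux

/-- Correctness of the no-boundary same-partition query: for `s, t` in the same partition
`G_i`, the global distance equals the minimum of (a) the purely intra-partition distance
`d_{L_i}(s,t)` and (b) the best concatenation
`d_{L_i}(s,b_p) + d_{L̃}(b_p,b_q) + d_{L_i}(b_q,t)` over boundary pairs `b_p, b_q ∈ B_i`,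
where `d_{L_i}` is the distance within the subgraph `G_i` alone and `d_{L̃}` is the global
distance between boundary vertices. -/
theorem no_boundary_same_partition_query_correct
    {V : Type*} [Fintype V] [DecidableEq V] {k : ℕ}
    (part : V → Fin k) (B : Finset V) (w : V → V → ℝ≥0∞)
    (hsymm : ∀ u v, w u v = w v u)
    (hpos : ∀ u v, u ≠ v → 0 < w u v)
    -- every edge between different partitions joins two boundary vertices
    (hbd : ∀ u v, part u ≠ part v → w u v ≠ ⊤ → u ∈ B ∧ v ∈ B)
    (s t : V) (hst : part s = part t) :
    gdist w s t =
      min (gdist (restrictW part (part s) w) s t)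
        (⨅ bp ∈ (B.filter fun b => part b = part s),
          ⨅ bq ∈ (B.filter fun b => part b = part s),
            gdist (restrictW part (part s) w) s bp + gdist w bp bq
              + gdist (restrictW part (part s) w) bq t) := by
  refine le_antisymm (le_min ?_ ?_) ?_
  · exact gdist_mono (fun u v => le_restrictW u v) s t
  · refine le_iInf fun bp => le_iInf fun hbp => le_iInf fun bq => le_iInf fun hbq => ?_
    calc gdist w s t ≤ gdist w s bp + gdist w bp bq + gdist w bq t := by
          refine (gdist_triangle w s bq t).trans ?_
          exact add_le_add_left (gdist_triangle w s bp bq) _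
      _ ≤ gdist (restrictW part (part s) w) s bp + gdist w bp bq
            + gdist (restrictW part (part s) w) bq t := by
          refine add_le_add (add_le_add ?_ le_rfl) ?_ <;>
            exact gdist_mono (fun u v => le_restrictW u v) _ _
  · by_cases hst0 : s = t
    · subst hst0
      refine (min_le_left _ _).trans ?_
      rw [gdist_self, gdist_self]
    · conv_rhs => rw [gdist, if_neg hst0]
      exact le_iInf fun p => path_bound B hbd hst.symm p s rfl
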